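/- (Identity (1.14), key step of Proposition 1.4) Let k ∈ A^⊥ and let f : ℝ^d → ℝ be continuously differentiable and 2π-periodic in each coordinate (f(x + 2π ς_i) = f(x) for all x ∈ ℝ^d and i = 1, …, d). Then ∫_{[−π,π]^d} (∑_{i=1}^d ∂/∂x_i [A_i(f(x))]) · sin(⟨k, x⟩) dx = 0 and ∫_{[−π,π]^d} (∑_{i=1}^d ∂/∂x_i [A_i(f(x))]) · cos(⟨k, x⟩) dx = 0. -/

import Mathlib

open scoped BigOperators
open MeasureTheory

/-- Master lemma: the integral over `[-π,π]^{n+1}` of the divergence of a `C¹`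
vector field that is `2π`-periodic in each coordinate vanishes. -/
theorem div_periodic_zero {n : ℕ} (F : (Fin (n + 1) → ℝ) → (Fin (n + 1) → ℝ))
    (hF : ContDiff ℝ 1 F)
    (hper : ∀ (x : Fin (n + 1) → ℝ) (i : Fin (n + 1)),
      F (x + Pi.single i (2 * Real.pi)) = F x) :
    (∫ x in Set.Icc (fun _ : Fin (n + 1) => -Real.pi) (fun _ => Real.pi),
      ∑ i, fderiv ℝ F x (Pi.single i 1) i) = 0 := by
  set a : Fin (n + 1) → ℝ := fun _ => -Real.pi with ha
  set b : Fin (n + 1) → ℝ := fun _ => Real.pi with hb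
  have hle : a ≤ b := fun i => by
    simp only [ha, hb]
    linarith [Real.pi_pos]
  have hdiff : ∀ x, HasFDerivAt F (fderiv ℝ F x) x := fun x =>
    (hF.differentiable one_ne_zero x).hasFDerivAt
  have hcont : Continuous fun x => ∑ i, fderiv ℝ F x (Pi.single i 1) i := by
    have h1 : Continuous (fderiv ℝ F) := hF.continuous_fderiv one_ne_zero
    exact continuous_finset_sum _ fun i _ =>
      (continuous_apply i).comp
        (((ContinuousLinearMap.apply ℝ (Fin (n + 1) → ℝ)
          (Pi.single i 1 : Fin (n + 1) → ℝ)).continuous).comp h1)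
  have hdiv := MeasureTheory.integral_divergence_of_hasFDerivAt_off_countable
    (a := a) (b := b) hle F (fun x => fderiv ℝ F x) (∅ : Set (Fin (n + 1) → ℝ))
    Set.countable_empty hF.continuous.continuousOn
    (fun x _ => hdiff x) (hcont.continuousOn.integrableOn_compact isCompact_Icc)
  rw [hdiv]
  apply Finset.sum_eq_zero
  intro i _
  rw [sub_eq_zero]
  have hins : ∀ y : Fin n → ℝ,
      (i.insertNth (b i) y : Fin (n + 1) → ℝ) = (i.insertNth (a i) y : Fin (n + 1) → ℝ) + Pi.single i (2 * Real.pi) := by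
    intro y
    funext j
    refine Fin.succAboveCases i ?_ ?_ j
    · simp only [Fin.insertNth_apply_same, Pi.add_apply, Pi.single_eq_same, ha, hb]
      ring
    · intro m
      simp only [Fin.insertNth_apply_succAbove, Pi.add_apply,
        Pi.single_eq_of_ne (Fin.succAbove_ne i m), add_zero]
  refine MeasureTheory.integral_congr_ae (Filter.Eventually.of_forall fun y => ?_)
  show F (i.insertNth (b i) y) i = F (i.insertNth (a i) y) i
  rw [hins y, hper]

/-- Divergence form of the master lemma for component functions. -/
theorem div_periodic_zero' {n : ℕ} (V : Fin (n + 1) → (Fin (n + 1) → ℝ) → ℝ)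
    (hV : ∀ i, ContDiff ℝ 1 (V i))
    (hper : ∀ (x : Fin (n + 1) → ℝ) (i j : Fin (n + 1)),
      V j (x + Pi.single i (2 * Real.pi)) = V j x) :
    (∫ x in Set.Icc (fun _ : Fin (n + 1) => -Real.pi) (fun _ => Real.pi),
      ∑ i, fderiv ℝ (V i) x (Pi.single i 1)) = 0 := by
  have h := div_periodic_zero (fun x j => V j x) (contDiff_pi.2 hV)
    (fun x i => funext fun j => hper x i j)
  have heq : ∀ x : Fin (n + 1) → ℝ, ∀ i : Fin (n + 1),
      fderiv ℝ (fun x j => V j x) x (Pi.single i 1) i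
        = fderiv ℝ (V i) x (Pi.single i 1) := by
    intro x i
    rw [fderiv_pi (fun j => ((hV j).differentiable one_ne_zero).differentiableAt)]
    simp [ContinuousLinearMap.pi_apply]
  simpa only [heq] using h

theorem statement10 {d kk : ℕ} (hd : 1 ≤ d) (hk : 1 ≤ kk)
    (coef : Fin d → ℕ → ℝ)
    (k : Fin d → ℤ)
    (hkperp : ∀ j : ℕ, 1 ≤ j → j ≤ kk → ∑ i, coef i j * (k i : ℝ) = 0)
    (f : (Fin d → ℝ) → ℝ) (hf : ContDiff ℝ 1 f)
    (hper : ∀ (x : Fin d → ℝ) (i : Fin d), f (x + Pi.single i (2 * Real.pi)) = f x) :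
    (∫ x in Set.univ.pi (fun _ : Fin d => Set.Icc (-Real.pi) Real.pi),
        (∑ i, fderiv ℝ (fun y => ∑ j ∈ Finset.range (kk + 1), coef i j * f y ^ j) x
            (Pi.single i 1)) * Real.sin (∑ i, (k i : ℝ) * x i)) = 0 ∧
    (∫ x in Set.univ.pi (fun _ : Fin d => Set.Icc (-Real.pi) Real.pi),
        (∑ i, fderiv ℝ (fun y => ∑ j ∈ Finset.range (kk + 1), coef i j * f y ^ j) x
            (Pi.single i 1)) * Real.cos (∑ i, (k i : ℝ) * x i)) = 0 := by
  obtain ⟨n, rfl⟩ : ∃ n, d = n + 1 := ⟨d - 1, by omega⟩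
  -- the functions A_i ∘ f
  set g : Fin (n + 1) → (Fin (n + 1) → ℝ) → ℝ :=
    fun i y => ∑ j ∈ Finset.range (kk + 1), coef i j * f y ^ j with hgdef
  have hg : ∀ i, ContDiff ℝ 1 (g i) := fun i =>
    ContDiff.sum fun j _ => contDiff_const.mul (hf.pow j)
  have hgper : ∀ (x : Fin (n + 1) → ℝ) (i i' : Fin (n + 1)),
      g i' (x + Pi.single i (2 * Real.pi)) = g i' x := by
    intro x i i'; simp only [hgdef, hper]
  -- rewrite the domain as an Icc
  have hdom : (Set.univ.pi fun _ : Fin (n + 1) => Set.Icc (-Real.pi) Real.pi)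
      = Set.Icc (fun _ : Fin (n + 1) => -Real.pi) (fun _ => Real.pi) :=
    Set.pi_univ_Icc _ _
  rw [hdom]
  -- the linear functional ⟨k, ·⟩
  set L : (Fin (n + 1) → ℝ) →L[ℝ] ℝ :=
    ∑ i, (k i : ℝ) • ContinuousLinearMap.proj i with hLdef
  have hL : ∀ v : Fin (n + 1) → ℝ, L v = ∑ i, (k i : ℝ) * v i := by
    intro v
    simp [hLdef, ContinuousLinearMap.sum_apply]
  have hLe : ∀ i, L (Pi.single i 1) = (k i : ℝ) := by
    intro i
    rw [hL]
    simp [Pi.single_apply]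
  have hph : ∀ x, HasFDerivAt (fun x : Fin (n + 1) → ℝ => ∑ i, (k i : ℝ) * x i) L x :=
    fun x => (L.hasFDerivAt (x := x)).congr_of_eventuallyEq
      (Filter.Eventually.of_forall fun y => (hL y).symm)
  have hphc : ContDiff ℝ 1 (fun x : Fin (n + 1) → ℝ => ∑ i, (k i : ℝ) * x i) :=
    ContDiff.sum fun i _ => contDiff_const.mul (contDiff_apply ℝ ℝ i)
  have hphshift : ∀ (x : Fin (n + 1) → ℝ) (i : Fin (n + 1)),
      (∑ j, (k j : ℝ) * ((x + Pi.single i (2 * Real.pi) : Fin (n+1) → ℝ)) j)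
        = (∑ j, (k j : ℝ) * x j) + (k i : ℝ) * (2 * Real.pi) := by
    intro x i
    simp only [Pi.add_apply, mul_add, Finset.sum_add_distrib]
    congr 1
    simp [Pi.single_apply, mul_ite, Finset.sum_ite_eq']
  have hgd : ∀ i x, HasFDerivAt (g i) (fderiv ℝ (g i) x) x := fun i x =>
    ((hg i).differentiable one_ne_zero x).hasFDerivAt
  by_cases hk0 : k = 0
  · constructor
    · simp [hk0]
    · have : ∀ x : Fin (n + 1) → ℝ,
          Real.cos (∑ i, ((k i : ℝ)) * x i) = 1 := by
        intro x; simp [hk0]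
      refine Eq.trans ?_ (div_periodic_zero' g hg (fun x i j => hgper x i j))
      refine MeasureTheory.integral_congr_ae (Filter.Eventually.of_forall fun x => ?_)
      simp [hk0]
      rfl
  · -- k ≠ 0
    obtain ⟨i0, hi0⟩ := Function.ne_iff.1 hk0
    simp only [Pi.zero_apply] at hi0
    have hki0 : ((k i0 : ℝ)) ≠ 0 := by
      simpa using hi0
    set C : ℝ := ∑ i, coef i 0 * (k i : ℝ) with hCdef
    set c : Fin (n + 1) → ℝ := fun i => if i = i0 then C / (k i0 : ℝ) else 0 with hcdef
    have hc : ∑ i, c i * (k i : ℝ) = C := by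
      simp only [hcdef, ite_mul, zero_mul]
      rw [Finset.sum_ite_eq' Finset.univ i0]
      simp [div_mul_cancel₀ _ hki0]
    have hsumg : ∀ x, (∑ i, g i x * (k i : ℝ)) = C := by
      intro x
      simp only [hgdef, Finset.sum_mul]
      rw [Finset.sum_comm]
      rw [Finset.sum_eq_single 0]
      · simp [hCdef]
      · intro j hj hj0
        have hj1 : 1 ≤ j := by omega
        have hj2 : j ≤ kk := by
          simp only [Finset.mem_range] at hj; omega
        have hzero := hkperp j hj1 hj2
        have : (∑ i, coef i j * f x ^ j * (k i : ℝ))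
            = (∑ i, coef i j * (k i : ℝ)) * f x ^ j := by
          rw [Finset.sum_mul]
          exact Finset.sum_congr rfl fun i _ => by ring
        rw [this, hzero, zero_mul]
      · intro h; exact absurd (Finset.mem_range.2 (by omega)) h
    constructor
    · -- sin case
      set V : Fin (n + 1) → (Fin (n + 1) → ℝ) → ℝ :=
        fun i x => (g i x - c i) * Real.sin (∑ j, (k j : ℝ) * x j) with hVdef
      have hVfd : ∀ i x, HasFDerivAt (V i)
          ((g i x - c i) • (Real.cos (∑ j, (k j : ℝ) * x j) • L)
            + Real.sin (∑ j, (k j : ℝ) * x j) • fderiv ℝ (g i) x) x := by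
        intro i x
        exact ((hgd i x).sub_const (c i)).mul
          ((Real.hasDerivAt_sin _).comp_hasFDerivAt x (hph x))
      have hVc : ∀ i, ContDiff ℝ 1 (V i) := fun i =>
        ((hg i).sub contDiff_const).mul (Real.contDiff_sin.comp hphc)
      have hVper : ∀ (x : Fin (n + 1) → ℝ) (i j : Fin (n + 1)),
          V j (x + Pi.single i (2 * Real.pi)) = V j x := by
        intro x i j
        simp only [hVdef, hgper, hphshift]
        rw [Real.sin_add_int_mul_two_pi]
      refine Eq.trans ?_ (div_periodic_zero' V hVc hVper)
      refine MeasureTheory.integral_congr_ae (Filter.Eventually.of_forall fun x => ?_)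
      have heval : ∀ i, fderiv ℝ (V i) x (Pi.single i 1)
          = (g i x - c i) * (Real.cos (∑ j, (k j : ℝ) * x j) * (k i : ℝ))
            + Real.sin (∑ j, (k j : ℝ) * x j) * fderiv ℝ (g i) x (Pi.single i 1) := by
        intro i
        rw [(hVfd i x).fderiv]
        simp [hLe i, mul_assoc]
      calc (∑ i, fderiv ℝ (fun y => ∑ j ∈ Finset.range (kk + 1), coef i j * f y ^ j) x
              (Pi.single i 1)) * Real.sin (∑ i, (k i : ℝ) * x i)
          = ∑ i, ((g i x - c i) * (Real.cos (∑ j, (k j : ℝ) * x j) * (k i : ℝ))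
              + Real.sin (∑ j, (k j : ℝ) * x j) * fderiv ℝ (g i) x (Pi.single i 1)) := by
            rw [Finset.sum_add_distrib]
            have h1 : ∑ i, (g i x - c i) * (Real.cos (∑ j, (k j : ℝ) * x j) * (k i : ℝ))
                = Real.cos (∑ j, (k j : ℝ) * x j)
                    * ((∑ i, g i x * (k i : ℝ)) - ∑ i, c i * (k i : ℝ)) := by
              rw [← Finset.sum_sub_distrib, Finset.mul_sum]
              exact Finset.sum_congr rfl fun i _ => by ring
            rw [h1, hsumg, hc, sub_self, mul_zero, zero_add, ← Finset.mul_sum]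
            rw [mul_comm]
        _ = ∑ i, fderiv ℝ (V i) x (Pi.single i 1) :=
            (Finset.sum_congr rfl fun i _ => (heval i).symm)
    · -- cos case
      set W : Fin (n + 1) → (Fin (n + 1) → ℝ) → ℝ :=
        fun i x => (g i x - c i) * Real.cos (∑ j, (k j : ℝ) * x j) with hWdef
      have hWfd : ∀ i x, HasFDerivAt (W i)
          ((g i x - c i) • ((-Real.sin (∑ j, (k j : ℝ) * x j)) • L)
            + Real.cos (∑ j, (k j : ℝ) * x j) • fderiv ℝ (g i) x) x := by
        intro i x
        exact ((hgd i x).sub_const (c i)).mul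
          ((Real.hasDerivAt_cos _).comp_hasFDerivAt x (hph x))
      have hWc : ∀ i, ContDiff ℝ 1 (W i) := fun i =>
        ((hg i).sub contDiff_const).mul (Real.contDiff_cos.comp hphc)
      have hWper : ∀ (x : Fin (n + 1) → ℝ) (i j : Fin (n + 1)),
          W j (x + Pi.single i (2 * Real.pi)) = W j x := by
        intro x i j
        simp only [hWdef, hgper, hphshift]
        rw [Real.cos_add_int_mul_two_pi]
      refine Eq.trans ?_ (div_periodic_zero' W hWc hWper)
      refine MeasureTheory.integral_congr_ae (Filter.Eventually.of_forall fun x => ?_)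
      have heval : ∀ i, fderiv ℝ (W i) x (Pi.single i 1)
          = (g i x - c i) * ((-Real.sin (∑ j, (k j : ℝ) * x j)) * (k i : ℝ))
            + Real.cos (∑ j, (k j : ℝ) * x j) * fderiv ℝ (g i) x (Pi.single i 1) := by
        intro i
        rw [(hWfd i x).fderiv]
        simp [hLe i, mul_assoc]
      calc (∑ i, fderiv ℝ (fun y => ∑ j ∈ Finset.range (kk + 1), coef i j * f y ^ j) x
              (Pi.single i 1)) * Real.cos (∑ i, (k i : ℝ) * x i)
          = ∑ i, ((g i x - c i) * ((-Real.sin (∑ j, (k j : ℝ) * x j)) * (k i : ℝ))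
              + Real.cos (∑ j, (k j : ℝ) * x j) * fderiv ℝ (g i) x (Pi.single i 1)) := by
            rw [Finset.sum_add_distrib]
            have h1 : ∑ i, (g i x - c i) * ((-Real.sin (∑ j, (k j : ℝ) * x j)) * (k i : ℝ))
                = (-Real.sin (∑ j, (k j : ℝ) * x j))
                    * ((∑ i, g i x * (k i : ℝ)) - ∑ i, c i * (k i : ℝ)) := by
              rw [← Finset.sum_sub_distrib, Finset.mul_sum]
              exact Finset.sum_congr rfl fun i _ => by ring
            rw [h1, hsumg, hc, sub_self, mul_zero, zero_add, ← Finset.mul_sum]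
            rw [mul_comm]
        _ = ∑ i, fderiv ℝ (W i) x (Pi.single i 1) :=
            (Finset.sum_congr rfl fun i _ => (heval i).symm)
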